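/- For every integer n ≥ 1, W_{n+1}·W_{n−1} − W_n² = (−q)^{n−1}·(U_2·U_0 − U_1²)·(w_1² − p·w_1·w_0 − q·w_0²). -/

import Mathlib

open Quaternion

theorem stmt2 (p q : ℝ) (w : ℕ → ℝ) (hw : ∀ n, w (n + 2) = p * w (n + 1) + q * w n)
    (W : ℕ → ℍ[ℝ]) (hW : ∀ n, W n = ⟨w n, w (n + 1), w (n + 2), w (n + 3)⟩)
    (u : ℕ → ℝ) (hu : ∀ n, u (n + 2) = p * u (n + 1) + q * u n)
    (hu0 : u 0 = 0) (hu1 : u 1 = 1)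
    (U : ℕ → ℍ[ℝ]) (hU : ∀ n, U n = ⟨u n, u (n + 1), u (n + 2), u (n + 3)⟩)
    (n : ℕ) (hn : 1 ≤ n) :
    W (n + 1) * W (n - 1) - (W n) ^ 2 =
      ((-q) ^ (n - 1) * (w 1 ^ 2 - p * w 1 * w 0 - q * w 0 ^ 2)) •
        (U 2 * U 0 - (U 1) ^ 2) := by
  have key : ∀ m : ℕ, W (m + 2) = p • W (m + 1) + q • W m := by
    intro m
    rw [hW, hW, hW]
    ext <;> simp [hw] <;> rfl
  induction n, hn using Nat.le_induction with
  | base =>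
    have h2 : w 2 = p * w 1 + q * w 0 := hw 0
    have h3 : w 3 = p * w 2 + q * w 1 := hw 1
    have h4 : w 4 = p * w 3 + q * w 2 := hw 2
    have h5 : w 5 = p * w 4 + q * w 3 := hw 3
    have k2 : u 2 = p * u 1 + q * u 0 := hu 0
    have k3 : u 3 = p * u 2 + q * u 1 := hu 1
    have k4 : u 4 = p * u 3 + q * u 2 := hu 2
    have k5 : u 5 = p * u 4 + q * u 3 := hu 3
    norm_num
    rw [sq (W 1), sq (U 1)]
    rw [hW 2, hW 0, hW 1, hU 2, hU 0, hU 1]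
    norm_num
    have hm : ∀ a1 a2 a3 a4 b1 b2 b3 b4 : ℝ, (⟨a1, a2, a3, a4⟩ * ⟨b1, b2, b3, b4⟩ : ℍ[ℝ]) =
        ⟨a1 * b1 + (-1) * a2 * b2 + (-1) * a3 * b3 + 0 * (-1) * a3 * b4 - (-1) * (-1) * a4 * b4,
          a1 * b2 + a2 * b1 + 0 * a2 * b2 - (-1) * a3 * b4 + (-1) * a4 * b3,
          a1 * b3 + (-1) * a2 * b4 + a3 * b1 + 0 * a3 * b2 - (-1) * a4 * b2,
          a1 * b4 + a2 * b3 + 0 * a2 * b4 - a3 * b2 + a4 * b1⟩ :=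
      fun _ _ _ _ _ _ _ _ => rfl
    have hs : ∀ a1 a2 a3 a4 b1 b2 b3 b4 : ℝ, (⟨a1, a2, a3, a4⟩ - ⟨b1, b2, b3, b4⟩ : ℍ[ℝ]) =
        ⟨a1 - b1, a2 - b2, a3 - b3, a4 - b4⟩ := fun _ _ _ _ _ _ _ _ => rfl
    have hsm : ∀ r a1 a2 a3 a4 : ℝ, (r • ⟨a1, a2, a3, a4⟩ : ℍ[ℝ]) = ⟨r * a1, r * a2, r * a3, r * a4⟩ :=
      fun _ _ _ _ _ => rfl
    simp only [hm, hs, hsm]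
    have hinj : ∀ a1 a2 a3 a4 b1 b2 b3 b4 : ℝ, a1 = b1 → a2 = b2 → a3 = b3 → a4 = b4 →
        (⟨a1, a2, a3, a4⟩ : ℍ[ℝ]) = ⟨b1, b2, b3, b4⟩ := by
      intros; subst_vars; rfl
    refine hinj _ _ _ _ _ _ _ _ ?_ ?_ ?_ ?_ <;>
      simp only [sq, Quaternion.re_mul, Quaternion.imI_mul, Quaternion.imJ_mul,
        Quaternion.imK_mul, Quaternion.re_sub, Quaternion.imI_sub, Quaternion.imJ_sub,
        Quaternion.imK_sub, Quaternion.re_smul, Quaternion.imI_smul, Quaternion.imJ_smul,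
        Quaternion.imK_smul, h5, h4, h3, h2, k5, k4, k3, k2, hu0, hu1, smul_eq_mul] <;>
      ring
  | succ n hn ih =>
    obtain ⟨m, rfl⟩ : ∃ m, n = m + 1 := ⟨n - 1, by omega⟩
    simp only [Nat.add_sub_cancel] at ih ⊢
    have h2 : W (m + 2) = p • W (m + 1) + q • W m := key m
    have expand : W (m + 1 + 2) * W (m + 1) - W (m + 2) ^ 2 =
        q • (W (m + 1) ^ 2 - W (m + 2) * W m) := by
      rw [key (m + 1), sq, sq]
      nth_rewrite 3 [h2]
      rw [add_mul, mul_add, smul_mul_assoc, smul_mul_assoc, mul_smul_comm, mul_smul_comm,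
        smul_sub]
      abel
    have ih' : W (m + 2) * W m - W (m + 1) ^ 2 =
        ((-q) ^ m * (w 1 ^ 2 - p * w 1 * w 0 - q * w 0 ^ 2)) • (U 2 * U 0 - U 1 ^ 2) := ih
    show W (m + 1 + 2) * W (m + 1) - W (m + 2) ^ 2 =
        ((-q) ^ (m + 1) * (w 1 ^ 2 - p * w 1 * w 0 - q * w 0 ^ 2)) • (U 2 * U 0 - U 1 ^ 2)
    rw [expand, show W (m + 1) ^ 2 - W (m + 2) * W m = -(W (m + 2) * W m - W (m + 1) ^ 2) by
      abel, ih', smul_neg, smul_smul, ← neg_smul, pow_succ]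
    congr 1
    ring
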